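/- For all x = (x₁, x₂) with x₁ > 0, x₂ > 0: (i) A₁(x) = (1/2)·M₁(x) + (ξρ/2)·L₁(x); (ii) A₂(x) = (ξ√(1−ρ²)/2)·L₁(x); (iii) the Stratonovich drift satisfies b(x) − (1/2)·( (DA₁)(x)[A₁(x)] + (DA₂)(x)[A₂(x)] ) = (1/2)(μ − ξρ/4)·M₂(x) − (1/4)·M₀(x) + (1/2)(κθ − ξ²/4)·L₂(x) − (κ/2)·L₀(x), where (DA_i)(x) denotes the Fréchet derivative of A_i at x. In particular the Heston vector fields V₀ = b − (1/2)(DA₁·A₁ + DA₂·A₂), V₁ = A₁, V₂ = A₂ all lie in the span of the fields M_n, L_n. -/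

import Mathlib

/-- The Heston basis vector field `M_n(x) = (2 x₁ x₂^{1-n/2}, 0)` (real power). -/
noncomputable def hestonMvec (n : ℕ) (x : ℝ × ℝ) : ℝ × ℝ :=
  (2 * x.1 * x.2 ^ (1 - (n : ℝ) / 2), 0)

/-- The Heston basis vector field `L_n(x) = (0, 2 x₂^{1-n/2})` (real power). -/
noncomputable def hestonLvec (n : ℕ) (x : ℝ × ℝ) : ℝ × ℝ :=
  (0, 2 * x.2 ^ (1 - (n : ℝ) / 2))

/-- The Heston drift `b(x) = (μ x₁, κ(θ - x₂))`. -/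
noncomputable def hestonDrift (μ κ θ : ℝ) (x : ℝ × ℝ) : ℝ × ℝ :=
  (μ * x.1, κ * (θ - x.2))

/-- The Heston diffusion vector field `A₁(x) = (x₁ x₂^{1/2}, ξρ x₂^{1/2})`. -/
noncomputable def hestonA1 (ξ ρ : ℝ) (x : ℝ × ℝ) : ℝ × ℝ :=
  (x.1 * x.2 ^ ((1 : ℝ) / 2), ξ * ρ * x.2 ^ ((1 : ℝ) / 2))

/-- The Heston diffusion vector field `A₂(x) = (0, ξ√(1-ρ²) x₂^{1/2})`. -/
noncomputable def hestonA2 (ξ ρ : ℝ) (x : ℝ × ℝ) : ℝ × ℝ :=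
  (0, ξ * Real.sqrt (1 - ρ ^ 2) * x.2 ^ ((1 : ℝ) / 2))


section hestonAux

lemma heston_hf (x : ℝ × ℝ) (hx₂ : 0 < x.2) :
    HasFDerivAt (fun p : ℝ × ℝ => p.2 ^ ((1:ℝ)/2))
      (((1:ℝ)/2 * x.2 ^ ((1:ℝ)/2 - 1)) • ContinuousLinearMap.snd ℝ ℝ ℝ) x := by
  have h := Real.hasDerivAt_rpow_const (x := x.2) (p := (1:ℝ)/2) (Or.inl hx₂.ne')
  exact h.comp_hasFDerivAt x (hasFDerivAt_snd)

lemma heston_hA1 (ξ ρ : ℝ) (x : ℝ × ℝ) (hx₂ : 0 < x.2) :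
    HasFDerivAt (hestonA1 ξ ρ)
      ((x.1 • (((1:ℝ)/2 * x.2 ^ ((1:ℝ)/2 - 1)) • ContinuousLinearMap.snd ℝ ℝ ℝ)
          + (x.2 ^ ((1:ℝ)/2)) • ContinuousLinearMap.fst ℝ ℝ ℝ).prod
        ((ξ * ρ) • (((1:ℝ)/2 * x.2 ^ ((1:ℝ)/2 - 1)) • ContinuousLinearMap.snd ℝ ℝ ℝ))) x := by
  have hf := heston_hf x hx₂
  exact HasFDerivAt.prodMk ((hasFDerivAt_fst.mul hf)) (hf.const_mul (ξ * ρ))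

lemma heston_hA2 (ξ ρ : ℝ) (x : ℝ × ℝ) (hx₂ : 0 < x.2) :
    HasFDerivAt (hestonA2 ξ ρ)
      ((0 : (ℝ × ℝ) →L[ℝ] ℝ).prod
        ((ξ * Real.sqrt (1 - ρ ^ 2)) • (((1:ℝ)/2 * x.2 ^ ((1:ℝ)/2 - 1)) • ContinuousLinearMap.snd ℝ ℝ ℝ))) x := by
  have hf := heston_hf x hx₂
  exact HasFDerivAt.prodMk (hasFDerivAt_const (0:ℝ) x) (hf.const_mul _)

end hestonAux

/-- On the open positive quadrant, the Heston vector fields `V₁ = A₁`, `V₂ = A₂` and the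
Stratonovich-corrected drift `V₀ = b - (1/2)(DA₁·A₁ + DA₂·A₂)` lie in the span of the
fields `M_n, L_n`, with the explicit expressions
`A₁ = (1/2) M₁ + (ξρ/2) L₁`, `A₂ = (ξ√(1-ρ²)/2) L₁`, and
`V₀ = (1/2)(μ - ξρ/4) M₂ - (1/4) M₀ + (1/2)(κθ - ξ²/4) L₂ - (κ/2) L₀`. -/
theorem heston_vector_fields_span (μ κ θ ξ ρ : ℝ) (hρ₁ : -1 < ρ) (hρ₂ : ρ < 1)
    (x : ℝ × ℝ) (hx₁ : 0 < x.1) (hx₂ : 0 < x.2) :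
    hestonA1 ξ ρ x = ((1 : ℝ) / 2) • hestonMvec 1 x + (ξ * ρ / 2) • hestonLvec 1 x ∧
    hestonA2 ξ ρ x = (ξ * Real.sqrt (1 - ρ ^ 2) / 2) • hestonLvec 1 x ∧
    hestonDrift μ κ θ x
        - ((1 : ℝ) / 2) • (fderiv ℝ (hestonA1 ξ ρ) x (hestonA1 ξ ρ x)
            + fderiv ℝ (hestonA2 ξ ρ) x (hestonA2 ξ ρ x))
      = ((1 / 2) * (μ - ξ * ρ / 4)) • hestonMvec 2 x
        + (-(1 / 4 : ℝ)) • hestonMvec 0 x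
        + ((1 / 2) * (κ * θ - ξ ^ 2 / 4)) • hestonLvec 2 x
        + (-(κ / 2)) • hestonLvec 0 x := by
  have hr : x.2 ^ ((1:ℝ)/2) * x.2 ^ ((1:ℝ)/2) = x.2 := by
    rw [← Real.rpow_add hx₂]; norm_num
  have hr2 : x.2 ^ ((1:ℝ)/2 - 1) * x.2 ^ ((1:ℝ)/2) = 1 := by
    rw [← Real.rpow_add hx₂]; norm_num
  have hs : Real.sqrt (1 - ρ ^ 2) * Real.sqrt (1 - ρ ^ 2) = 1 - ρ ^ 2 := by
    apply Real.mul_self_sqrt; nlinarith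
  have e1 : x.2 ^ (1 - ((1:ℕ):ℝ)/2) = x.2 ^ ((1:ℝ)/2) := by norm_num
  have e2 : x.2 ^ (1 - ((2:ℕ):ℝ)/2) = 1 := by norm_num
  have e0 : x.2 ^ (1 - ((0:ℕ):ℝ)/2) = x.2 := by norm_num
  refine ⟨?_, ?_, ?_⟩
  · simp only [hestonA1, hestonMvec, hestonLvec, Prod.smul_mk, Prod.mk_add_mk, smul_eq_mul, e1,
      Prod.mk.injEq]
    constructor <;> ring
  · simp only [hestonA2, hestonLvec, Prod.smul_mk, smul_eq_mul, e1, Prod.mk.injEq]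
    constructor <;> ring
  · rw [(heston_hA1 ξ ρ x hx₂).fderiv, (heston_hA2 ξ ρ x hx₂).fderiv]
    simp only [hestonA1, hestonA2, hestonDrift, hestonMvec, hestonLvec,
      ContinuousLinearMap.add_apply, ContinuousLinearMap.prod_apply,
      ContinuousLinearMap.smul_apply, ContinuousLinearMap.coe_fst',
      ContinuousLinearMap.coe_snd', ContinuousLinearMap.zero_apply,
      smul_eq_mul, Prod.smul_mk, Prod.mk_add_mk, Prod.mk_sub_mk, e0, e2, Prod.mk.injEq]
    constructor
    · linear_combination (-(x.1)/2) * hr + (-(ξ*ρ*x.1)/4) * hr2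
    · linear_combination (-(ξ^2*ρ^2)/4) * hr2
        + (-(ξ^2)/4 * (Real.sqrt (1-ρ^2) * Real.sqrt (1-ρ^2))) * hr2 + (-(ξ^2)/4) * hs
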